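/- arXiv:2207.09148 — 9 statements merged into one kernel-verified Lean document; each statement's English description precedes it below -/
import Mathlib

section
/- Let L be a complete atomistic ortholattice and X = At(L) its set of atoms with a ⊥ b iff a ≤ b^⊥. Then (X,⊥) is a point-closed orthoset, and the map L → C(X,⊥), p ↦ {x ∈ X : x ≤ p}, is an isomorphism of ortholattices. -/
/-- The set of elements orthogonal to every element of `A`. -/
def perpSet {X : Type*} (perp : X → X → Prop) (A : Set X) : Set X :=
  {x | ∀ a ∈ A, perp x a}

/-- A subset is orthoclosed if it equals its double orthocomplement. -/
def Orthoclosed {X : Type*} (perp : X → X → Prop) (A : Set X) : Prop :=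
  perpSet perp (perpSet perp A) = A

/-- `φ` (restricted to `∁(A^⊥)`) is a Sasaki map to the orthoclosed set `A`. -/
def IsSasakiMap {X : Type*} (perp : X → X → Prop) (A : Set X) (φ : X → X) : Prop :=
  (∀ e ∈ (perpSet perp A)ᶜ, φ e ∈ A) ∧
  (∀ e ∈ A, φ e = e) ∧
  (∀ e ∈ (perpSet perp A)ᶜ, ∀ f ∈ (perpSet perp A)ᶜ, (perp (φ e) f ↔ perp e (φ f)))

/-- A Sasaki space: every orthoclosed subset admits a Sasaki map. -/
def IsSasakiSpace {X : Type*} (perp : X → X → Prop) : Prop :=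
  ∀ A : Set X, Orthoclosed perp A → ∃ φ : X → X, IsSasakiMap perp A φ

/-- for a complete atomistic ortholattice `L`, the set of atoms
with `a ⊥ b` iff `a ≤ b^⊥` is a point-closed orthoset, and
`p ↦ {atoms ≤ p}` is an isomorphism of ortholattices onto `C(X,⊥)`. -/
theorem atoms_of_complete_atomistic_ortholattice {L : Type*} [CompleteLattice L]
    (oc : L → L)
    (horder : ∀ x y : L, x ≤ y → oc y ≤ oc x)
    (hinv : ∀ x : L, oc (oc x) = x)
    (hbot : ∀ x : L, x ⊓ oc x = ⊥)
    (hatomistic : ∀ x : L, x = sSup {a : L | IsAtom a ∧ a ≤ x}) :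
    letI X := {a : L // IsAtom a}
    letI perp : X → X → Prop := fun a b => a.1 ≤ oc b.1
    letI ψ : L → Set X := fun p => {a : X | a.1 ≤ p}
    -- `(X,⊥)` is a point-closed orthoset
    (∀ a b : X, perp a b → perp b a) ∧
    (∀ a : X, ¬ perp a a) ∧
    (∀ a : X, Orthoclosed perp {a}) ∧
    -- `ψ` is an isomorphism of ortholattices onto `C(X,⊥)`
    Function.Injective ψ ∧
    (∀ p : L, Orthoclosed perp (ψ p)) ∧
    (∀ A : Set X, Orthoclosed perp A → ∃ p : L, ψ p = A) ∧
    (∀ p q : L, p ≤ q ↔ ψ p ⊆ ψ q) ∧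
    (∀ p : L, ψ (oc p) = perpSet perp (ψ p)) := by
  dsimp only
  set perp : {a : L // IsAtom a} → {a : L // IsAtom a} → Prop := fun a b => a.1 ≤ oc b.1 with hperpdef
  set ψ : L → Set {a : L // IsAtom a} := fun p => {a | a.1 ≤ p} with hψdef
  -- Galois property of the orthocomplementation
  have galois : ∀ x y : L, x ≤ oc y ↔ y ≤ oc x := by
    intro x y
    constructor
    · intro h
      have := horder _ _ h
      rw [hinv] at this
      exact this.trans (le_refl _)
    · intro h
      have := horder _ _ h
      rw [hinv] at this
      exact this
  -- ψ of an atom is the singleton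
  have hsing : ∀ a : {a : L // IsAtom a}, ψ a.1 = {a} := by
    intro a
    ext b
    simp only [Set.mem_singleton_iff, Set.mem_setOf_eq]
    constructor
    · intro h
      rcases lt_or_eq_of_le h with h | h
      · exact absurd (a.2.2 _ h) b.2.1
      · exact Subtype.ext h
    · intro h; rw [h]; exact le_rfl
  -- general formula for perpSet of a set of atoms
  have hperp : ∀ A : Set {a : L // IsAtom a}, perpSet perp A = ψ (oc (sSup (Subtype.val '' A))) := by
    intro A
    ext x
    simp only [perpSet, Set.mem_setOf_eq]
    constructor
    · intro h
      refine (galois _ _).mpr ?_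
      refine sSup_le ?_
      rintro b ⟨b, hb, rfl⟩
      exact (galois _ _).mp (h b hb)
    · intro h a ha
      refine (galois _ _).mpr ?_
      have : a.1 ≤ sSup (Subtype.val '' A) := le_sSup ⟨a, ha, rfl⟩
      exact this.trans ((galois _ _).mp h)
  have himg : ∀ p : L, Subtype.val '' (ψ p) = {a : L | IsAtom a ∧ a ≤ p} := by
    intro p
    ext a
    constructor
    · rintro ⟨b, hb, rfl⟩; exact ⟨b.2, hb⟩
    · rintro ⟨ha, hle⟩; exact ⟨⟨a, ha⟩, hle, rfl⟩
  have key : ∀ p : L, perpSet perp (ψ p) = ψ (oc p) := by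
    intro p
    rw [hperp, himg, ← hatomistic p]
  have hoc : ∀ p : L, Orthoclosed perp (ψ p) := by
    intro p
    unfold Orthoclosed
    rw [key, key, hinv]
  have hmono : ∀ p q : L, p ≤ q ↔ ψ p ⊆ ψ q := by
    intro p q
    constructor
    · intro h a ha; exact le_trans ha h
    · intro h
      conv_lhs => rw [hatomistic p]
      refine sSup_le ?_
      rintro a ⟨ha, hle⟩
      exact @h ⟨a, ha⟩ hle
  refine ⟨?_, ?_, ?_, ?_, hoc, ?_, hmono, fun p => (key p).symm⟩
  · intro a b h; exact (galois _ _).mp h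
  · intro a h
    have : a.1 ≤ ⊥ := by rw [← hbot a.1]; exact le_inf le_rfl h
    exact a.2.1 (le_bot_iff.mp this)
  · intro a
    unfold Orthoclosed
    have : ({a} : Set {a : L // IsAtom a}) = ψ a.1 := (hsing a).symm
    rw [this, key, key, hinv]
  · intro p q h
    have h1 : p ≤ q := (hmono p q).mpr (le_of_eq h)
    have h2 : q ≤ p := (hmono q p).mpr (ge_of_eq h)
    exact le_antisymm h1 h2
  · intro A hA
    refine ⟨sSup (Subtype.val '' A), ?_⟩
    have := hA
    unfold Orthoclosed at this
    rw [hperp A, key, hinv] at this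
    exact this
end

section
/- Let H be an orthomodular space. Then the orthoset (P(H),⊥) is a Sasaki space: for every closed subspace S of H, the map ⟨x⟩ ↦ ⟨P_S(x)⟩ (where P_S is the orthogonal projection onto S), defined for ⟨x⟩ not orthogonal to S, is a Sasaki map to P(S). -/
/-- Vector-level orthocomplement of a subset of a Hermitian space. -/
def vperp {K H : Type*} (B : H → H → K) [Zero K] (S : Set H) : Set H :=
  {x | ∀ y ∈ S, B x y = 0}

section Aux
variable {K : Type*} [DivisionRing K] [StarRing K] {H : Type*} [AddCommGroup H] [Module K H]

/-- The representative of `mk x` is a unit multiple of `x`. -/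
theorem rep_mk_smul (x : H) (h : x ≠ 0) :
    ∃ a : Kˣ, (Projectivization.mk K x h).rep = (a : K) • x := by
  have h1 : Projectivization.mk K (Projectivization.mk K x h).rep
      (Projectivization.rep_nonzero _) = Projectivization.mk K x h :=
    Projectivization.mk_rep _
  rw [Projectivization.mk_eq_mk_iff] at h1
  obtain ⟨a, ha⟩ := h1
  exact ⟨a, ha.symm⟩

/-- Main auxiliary lemma: a projection onto `vperp B S` induces a Sasaki map. -/
theorem sasaki_aux (B : H → H → K)
    (haddl : ∀ x y z : H, B (x + y) z = B x z + B y z)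
    (haddr : ∀ x y z : H, B x (y + z) = B x y + B x z)
    (hsmull : ∀ (c : K) (x y : H), B (c • x) y = c * B x y)
    (hsymm : ∀ x y : H, B x y = star (B y x))
    (haniso : ∀ x : H, B x x = 0 → x = 0)
    (S : Set H) (P : H → H)
    (hP : ∀ x : H, P x ∈ vperp B S ∧ x - P x ∈ vperp B (vperp B S))
    (φ : Projectivization K H → Projectivization K H)
    (hφ : ∀ u ∈ (perpSet (fun u v : Projectivization K H => B u.rep v.rep = 0)
        {u : Projectivization K H | u.rep ∈ vperp B S})ᶜ,
      ∃ h : P u.rep ≠ 0, φ u = Projectivization.mk K (P u.rep) h) :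
    IsSasakiMap (fun u v : Projectivization K H => B u.rep v.rep = 0)
      {u : Projectivization K H | u.rep ∈ vperp B S} φ := by
  have hswap : ∀ x y : H, B x y = 0 ↔ B y x = 0 := by
    intro x y; rw [hsymm x y, star_eq_zero]
  have hsubr : ∀ x y z : H, B x (y - z) = B x y - B x z := by
    intro x y z
    have h1 : B x (y - z + z) = B x (y - z) + B x z := haddr _ _ _
    rw [sub_add_cancel] at h1
    rw [eq_sub_of_add_eq h1.symm]
  have hsubl : ∀ x y z : H, B (x - y) z = B x z - B y z := by
    intro x y z
    have h1 : B (x - y + y) z = B (x - y) z + B y z := haddl _ _ _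
    rw [sub_add_cancel] at h1
    rw [eq_sub_of_add_eq h1.symm]
  -- smul-invariance of orthogonality
  have hsmul_iff_l : ∀ (a : Kˣ) (x y : H), (B ((a : K) • x) y = 0 ↔ B x y = 0) := by
    intro a x y
    rw [hsmull]
    exact a.mul_right_eq_zero
  have hsmul_iff_r : ∀ (a : Kˣ) (x y : H), (B x ((a : K) • y) = 0 ↔ B x y = 0) := by
    intro a x y
    rw [hswap x, hsmul_iff_l, hswap]
  -- key projection identities
  have hBPl : ∀ x y : H, B (P x) y = B (P x) (P y) := by
    intro x y
    have h1 : B (y - P y) (P x) = 0 := (hP y).2 _ (hP x).1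
    have h2 : B (P x) (y - P y) = 0 := (hswap _ _).mpr h1
    rw [hsubr] at h2
    exact sub_eq_zero.mp h2
  have hBPr : ∀ x y : H, B x (P y) = B (P x) (P y) := by
    intro x y
    have h1 : B (x - P x) (P y) = 0 := (hP x).2 _ (hP y).1
    rw [hsubl] at h1
    exact sub_eq_zero.mp h1
  -- P fixes vperp B S
  have hfix : ∀ x : H, x ∈ vperp B S → P x = x := by
    intro x hx
    have hz1 : x - P x ∈ vperp B S := by
      intro y hy
      rw [hsubl, hx y hy, (hP x).1 y hy, sub_zero]
    have hz2 : B (x - P x) (x - P x) = 0 := (hP x).2 _ hz1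
    have h3 : x - P x = 0 := haniso _ hz2
    have h4 : x = P x := sub_eq_zero.mp h3
    exact h4.symm
  refine ⟨?_, ?_, ?_⟩
  · -- φ maps into A
    intro e he
    obtain ⟨h, heq⟩ := hφ e he
    rw [heq]
    obtain ⟨a, ha⟩ := rep_mk_smul (K := K) (P e.rep) h
    show (Projectivization.mk K (P e.rep) h).rep ∈ vperp B S
    rw [ha]
    intro y hy
    rw [hsmull, (hP e.rep).1 y hy, mul_zero]
  · -- φ fixes A
    intro e he
    have hec : e ∈ (perpSet (fun u v : Projectivization K H => B u.rep v.rep = 0)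
        {u : Projectivization K H | u.rep ∈ vperp B S})ᶜ := by
      intro hmem
      have h0 : B e.rep e.rep = 0 := hmem e he
      exact Projectivization.rep_nonzero e (haniso _ h0)
    obtain ⟨h, heq⟩ := hφ e hec
    rw [heq]
    have hfixe : P e.rep = e.rep := hfix _ he
    have : Projectivization.mk K (P e.rep) h
        = Projectivization.mk K e.rep (Projectivization.rep_nonzero e) := by
      rw [Projectivization.mk_eq_mk_iff]
      exact ⟨1, by rw [one_smul, hfixe]⟩
    rw [this, Projectivization.mk_rep]
  · -- symmetry
    intro e he f hf
    obtain ⟨h1, heq1⟩ := hφ e he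
    obtain ⟨h2, heq2⟩ := hφ f hf
    rw [heq1, heq2]
    obtain ⟨a, ha⟩ := rep_mk_smul (K := K) (P e.rep) h1
    obtain ⟨b, hb⟩ := rep_mk_smul (K := K) (P f.rep) h2
    show B (Projectivization.mk K (P e.rep) h1).rep f.rep = 0 ↔
      B e.rep (Projectivization.mk K (P f.rep) h2).rep = 0
    rw [ha, hb, hsmul_iff_l, hsmul_iff_r]
    rw [hBPl e.rep f.rep, ← hBPr e.rep f.rep]
end Aux

/-- for an orthomodular space `H`, the orthoset `(P(H),⊥)` is a
Sasaki space; moreover, for every closed subspace `M` of `H`, the map induced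
on `P(H)` by an orthogonal projection `P` onto `M` is a Sasaki map to `P(M)`. -/
theorem orthomodular_space_is_sasaki_space {K : Type*} [DivisionRing K]
    [StarRing K] {H : Type*} [AddCommGroup H] [Module K H]
    (B : H → H → K)
    (haddl : ∀ x y z : H, B (x + y) z = B x z + B y z)
    (haddr : ∀ x y z : H, B x (y + z) = B x y + B x z)
    (hsmull : ∀ (c : K) (x y : H), B (c • x) y = c * B x y)
    (hsymm : ∀ x y : H, B x y = star (B y x))
    (haniso : ∀ x : H, B x x = 0 → x = 0)
    -- orthomodularity: `M + M^⊥ = H` for every closed subspace `M = S^⊥`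
    (hOM : ∀ S : Set H, ∀ x : H,
      ∃ m ∈ vperp B S, ∃ n ∈ vperp B (vperp B S), x = m + n) :
    letI perp : Projectivization K H → Projectivization K H → Prop :=
      fun u v => B u.rep v.rep = 0
    IsSasakiSpace perp ∧
    -- the Sasaki maps are induced by the orthogonal projections:
    (∀ S : Set H, ∀ P : H → H,
      (∀ x : H, P x ∈ vperp B S ∧ x - P x ∈ vperp B (vperp B S)) →
      ∀ φ : Projectivization K H → Projectivization K H,
        (∀ u ∈ (perpSet perp {u : Projectivization K H | u.rep ∈ vperp B S})ᶜ,
          ∃ h : P u.rep ≠ 0, φ u = Projectivization.mk K (P u.rep) h) →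
        IsSasakiMap perp {u : Projectivization K H | u.rep ∈ vperp B S} φ) := by
  classical
  set perp : Projectivization K H → Projectivization K H → Prop :=
    fun u v => B u.rep v.rep = 0 with hperp
  refine ⟨?_, ?_⟩
  · -- Sasaki space
    intro A hA
    -- realize A as the projectivization of a closed subspace
    set S : Set H := Projectivization.rep '' (perpSet perp A) with hS
    have hAeq : A = {u : Projectivization K H | u.rep ∈ vperp B S} := by
      conv_lhs => rw [← hA]
      ext u
      simp only [Set.mem_setOf_eq, perpSet, vperp, hS, Set.mem_image]
      constructor
      · rintro h y ⟨v, hv, rfl⟩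
        exact h v hv
      · intro h v hv
        exact h v.rep ⟨v, hv, rfl⟩
    -- construct the projection from orthomodularity
    choose m hm n hn hx using hOM S
    set P : H → H := m with hPdef
    have hP : ∀ x : H, P x ∈ vperp B S ∧ x - P x ∈ vperp B (vperp B S) := by
      intro x
      refine ⟨hm x, ?_⟩
      have h2 : x - P x = n x := sub_eq_of_eq_add' (hx x)
      rw [h2]; exact hn x
    -- construct φ
    set φ : Projectivization K H → Projectivization K H :=
      fun u => if h : P u.rep ≠ 0 then Projectivization.mk K (P u.rep) h else u with hφdef
    have hφ : ∀ u ∈ (perpSet perp {u : Projectivization K H | u.rep ∈ vperp B S})ᶜ,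
        ∃ h : P u.rep ≠ 0, φ u = Projectivization.mk K (P u.rep) h := by
      intro u hu
      have hnz : P u.rep ≠ 0 := by
        intro h0
        apply hu
        intro a ha
        have hmem : u.rep ∈ vperp B (vperp B S) := by
          have := (hP u.rep).2
          rwa [h0, sub_zero] at this
        exact hmem a.rep ha
      exact ⟨hnz, by simp only [hφdef, dif_pos hnz]⟩
    refine ⟨φ, ?_⟩
    rw [hAeq]
    exact sasaki_aux B haddl haddr hsmull hsymm haniso S P hP φ hφ
  · -- projections induce Sasaki maps
    intro S P hP φ hφ
    exact sasaki_aux B haddl haddr hsmull hsymm haniso S P hP φ hφ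
end

section
/- Let L be an orthomodular lattice and x ∈ L. Then the Sasaki projection π_x is self-adjoint with respect to orthogonality: for all y, z ∈ L, π_x(y) ≤ z^⊥ if and only if y ≤ π_x(z)^⊥. -/
section
variable {L : Type*} [Lattice L] [BoundedOrder L]

/-- The defining properties of an orthocomplementation `oc` together with the
orthomodular law: `L` is an orthomodular lattice. -/
def IsOrthomodular (oc : L → L) : Prop :=
  (∀ x y : L, x ≤ y → oc y ≤ oc x) ∧
  (∀ x : L, oc (oc x) = x) ∧
  (∀ x : L, x ⊓ oc x = ⊥) ∧
  (∀ x y : L, x ≤ y → y = x ⊔ (y ⊓ oc x))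

/-- The Sasaki projection to `x`. -/
def sasakiProj (oc : L → L) (x y : L) : L := x ⊓ (oc x ⊔ y)

end

lemma sasaki_key {L : Type*} [Lattice L] [BoundedOrder L]
    (oc : L → L) (h : IsOrthomodular oc) (x y z : L)
    (hle : sasakiProj oc x y ≤ oc z) : y ≤ oc (sasakiProj oc x z) := by
  obtain ⟨hanti, hinv, -, hom⟩ := h
  -- Step 1: `oc x ⊔ (x ⊓ oc z) ≤ oc (π_x z)`
  have h1 : oc x ≤ oc (sasakiProj oc x z) := hanti _ _ inf_le_left
  have h2 : x ⊓ oc z ≤ oc (sasakiProj oc x z) := by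
    have ha : oc x ≤ oc (x ⊓ oc z) := hanti _ _ inf_le_left
    have hb : z ≤ oc (x ⊓ oc z) := by
      have := hanti _ _ (inf_le_right : x ⊓ oc z ≤ oc z)
      rwa [hinv] at this
    have hc : sasakiProj oc x z ≤ oc x ⊔ z := inf_le_right
    have hd : oc x ⊔ z ≤ oc (x ⊓ oc z) := sup_le ha hb
    have := hanti _ _ (le_trans hc hd)
    rwa [hinv] at this
  -- Step 2: orthomodular law applied to `oc x ≤ oc x ⊔ y`
  have hom' := hom (oc x) (oc x ⊔ y) le_sup_left
  rw [hinv] at hom'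
  -- Step 3: `(oc x ⊔ y) ⊓ x ≤ x ⊓ oc z`
  have h3 : (oc x ⊔ y) ⊓ x ≤ x ⊓ oc z := by
    rw [inf_comm]
    exact le_inf inf_le_left hle
  calc y ≤ oc x ⊔ y := le_sup_right
    _ = oc x ⊔ ((oc x ⊔ y) ⊓ x) := hom'
    _ ≤ oc x ⊔ (x ⊓ oc z) := sup_le le_sup_left (le_trans h3 le_sup_right)
    _ ≤ oc (sasakiProj oc x z) := sup_le h1 h2

/-- the Sasaki projection is self-adjoint w.r.t. orthogonality:
`π_x y ⊥ z` iff `y ⊥ π_x z`. -/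
theorem sasakiProj_selfAdjoint {L : Type*} [Lattice L] [BoundedOrder L]
    (oc : L → L) (h : IsOrthomodular oc) (x : L) :
    ∀ y z : L, sasakiProj oc x y ≤ oc z ↔ y ≤ oc (sasakiProj oc x z) := by
  intro y z
  have hanti := h.1
  have hinv := h.2.1
  constructor
  · exact sasaki_key oc h x y z
  · intro hle
    have h1 : sasakiProj oc x z ≤ oc y := by
      have := hanti _ _ hle
      rwa [hinv] at this
    have h2 : z ≤ oc (sasakiProj oc x y) := sasaki_key oc h x z y h1
    have := hanti _ _ h2
    rwa [hinv] at this
end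

section
/- Let L be a complete orthomodular lattice and X = L \ {0} with x ⊥ y iff x ≤ y^⊥. Then (X,⊥) is a Sasaki space, the orthoclosed subsets of X are exactly the sets X ∩ ↓x for x ∈ L, and for A = X ∩ ↓x the restriction-corestriction of the Sasaki projection π_x to a map ∁(A^⊥) → A is a Sasaki map to A. -/
/-- for a complete orthomodular lattice `L`, the orthoset
`X = L \ {⊥}` with `x ⊥ y` iff `x ≤ y^⊥` is a Sasaki space, its orthoclosed
subsets are exactly the sets `X ∩ ↓x`, and on `X ∩ ↓x` the Sasaki projection
`π_x` restricts–corestricts to a Sasaki map. -/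
theorem complete_OML_gives_sasaki_space {L : Type*} [CompleteLattice L]
    (oc : L → L)
    (horder : ∀ x y : L, x ≤ y → oc y ≤ oc x)
    (hinv : ∀ x : L, oc (oc x) = x)
    (hbot : ∀ x : L, x ⊓ oc x = ⊥)
    (hOM : ∀ x y : L, x ≤ y → y = x ⊔ (y ⊓ oc x)) :
    letI X := {p : L // p ≠ ⊥}
    letI perp : X → X → Prop := fun a b => a.1 ≤ oc b.1
    IsSasakiSpace perp ∧
    (∀ A : Set X, Orthoclosed perp A ↔ ∃ x : L, A = {y : X | y.1 ≤ x}) ∧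
    (∀ x : L, ∀ φ : X → X,
      (∀ y ∈ (perpSet perp {y : X | y.1 ≤ x})ᶜ, (φ y).1 = x ⊓ (oc x ⊔ y.1)) →
      IsSasakiMap perp {y : X | y.1 ≤ x} φ) ∧
    (∀ x : L, ∀ y : {p : L // p ≠ ⊥},
      y ∈ (perpSet (fun a b => a.1 ≤ oc b.1) {z : {p : L // p ≠ ⊥} | z.1 ≤ x})ᶜ →
      x ⊓ (oc x ⊔ y.1) ≠ ⊥) := by
  set X := {p : L // p ≠ ⊥} with hXdef
  set perp : X → X → Prop := fun a b => a.1 ≤ oc b.1 with hperpdef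
  -- basic facts
  have hsymm : ∀ a b : L, a ≤ oc b ↔ b ≤ oc a := by
    intro a b
    constructor
    · intro h; have := horder _ _ h; rw [hinv] at this; exact this
    · intro h; have := horder _ _ h; rw [hinv] at this; exact this
  have htop : ∀ x : L, x ⊔ oc x = ⊤ := by
    intro x
    have := hOM x ⊤ le_top
    simpa using this.symm
  have hocbot : oc (⊥ : L) = ⊤ := by
    have := htop (⊥ : L); simpa using this
  have hdm : ∀ a b : L, oc (a ⊔ b) = oc a ⊓ oc b := by
    intro a b
    apply le_antisymm
    · exact le_inf (horder _ _ le_sup_left) (horder _ _ le_sup_right)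
    · rw [hsymm]
      apply sup_le
      · rw [hsymm]; exact inf_le_left
      · rw [hsymm]; exact inf_le_right
  have hdm2 : ∀ a b : L, oc (a ⊓ b) = oc a ⊔ oc b := by
    intro a b
    conv_lhs => rw [← hinv a, ← hinv b, ← hdm, hinv]
  -- Sasaki fixpoint: a ≤ x → x ⊓ (oc x ⊔ a) = a
  have hfix : ∀ x a : L, a ≤ x → x ⊓ (oc x ⊔ a) = a := by
    intro x a ha
    have hax : a ≤ x ⊓ (oc x ⊔ a) := le_inf ha le_sup_right
    have h1 := hOM a (x ⊓ (oc x ⊔ a)) hax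
    have h2 : x ⊓ (oc x ⊔ a) ⊓ oc a = ⊥ := by
      have hle : x ⊓ (oc x ⊔ a) ⊓ oc a ≤ (oc x ⊔ a) ⊓ oc (oc x ⊔ a) := by
        rw [hdm, hinv]
        refine le_inf ?_ (le_inf ?_ ?_)
        · exact le_trans inf_le_left inf_le_right
        · exact le_trans inf_le_left inf_le_left
        · exact inf_le_right
      rw [hbot] at hle
      exact le_bot_iff.mp hle
    rw [h2, sup_bot_eq] at h1
    exact h1
  -- nonbot: ¬ y ≤ oc x → x ⊓ (oc x ⊔ y) ≠ ⊥
  have hne : ∀ x y : L, ¬ y ≤ oc x → x ⊓ (oc x ⊔ y) ≠ ⊥ := by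
    intro x y hy h0
    apply hy
    have h1 := hOM (oc x) (oc x ⊔ y) le_sup_left
    rw [hinv] at h1
    rw [inf_comm] at h0
    rw [h0, sup_bot_eq] at h1
    calc y ≤ oc x ⊔ y := le_sup_right
    _ = oc x := h1
  -- adjunction
  have hadj : ∀ x e f : L, x ⊓ (oc x ⊔ e) ≤ oc f → x ⊓ (oc x ⊔ f) ≤ oc e := by
    intro x e f h
    have h1 : f ≤ oc x ⊔ (x ⊓ oc e) := by
      rw [hsymm] at h
      calc f ≤ oc (x ⊓ (oc x ⊔ e)) := h
      _ = oc x ⊔ (x ⊓ oc e) := by rw [hdm2, hdm, hinv]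
    have h2 : x ⊓ (oc x ⊔ f) ≤ x ⊓ (oc x ⊔ (x ⊓ oc e)) :=
      inf_le_inf_left x (sup_le le_sup_left h1)
    have h3 : x ⊓ (oc x ⊔ (x ⊓ oc e)) = x ⊓ oc e := hfix x (x ⊓ oc e) inf_le_left
    rw [h3] at h2
    exact le_trans h2 inf_le_right
  -- perpSet of principal sets
  have hps : ∀ (x : L) (z : X),
      z ∈ perpSet perp {y : X | y.1 ≤ x} ↔ z.1 ≤ oc x := by
    intro x z
    constructor
    · intro hz
      by_cases hx : x = (⊥ : L)
      · rw [hx, hocbot]; exact le_top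
      · exact hz ⟨x, hx⟩ le_rfl
    · intro hz a ha
      exact le_trans hz (horder _ _ ha)
  have hpsS : ∀ x : L,
      perpSet perp {y : X | y.1 ≤ x} = {z : X | z.1 ≤ oc x} :=
    fun x => Set.ext (hps x)
  -- third conjunct
  have third : ∀ x : L, ∀ φ : X → X,
      (∀ y ∈ (perpSet perp {y : X | y.1 ≤ x})ᶜ, (φ y).1 = x ⊓ (oc x ⊔ y.1)) →
      IsSasakiMap perp {y : X | y.1 ≤ x} φ := by
    intro x φ hφ
    have hmemA : ∀ e : X, e ∈ {y : X | y.1 ≤ x} →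
        e ∈ (perpSet perp {y : X | y.1 ≤ x})ᶜ := by
      intro e he hmem
      rw [hpsS] at hmem
      have : e.1 ≤ x ⊓ oc x := le_inf he hmem
      rw [hbot] at this
      exact e.2 (le_bot_iff.mp this)
    refine ⟨?_, ?_, ?_⟩
    · intro e he
      show (φ e).1 ≤ x
      rw [hφ e he]
      exact inf_le_left
    · intro e he
      have h1 := hφ e (hmemA e he)
      apply Subtype.ext
      rw [h1]
      exact hfix x e.1 he
    · intro e he f hf
      show (φ e).1 ≤ oc f.1 ↔ e.1 ≤ oc (φ f).1
      rw [hφ e he, hφ f hf, hsymm (e.1)]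
      exact ⟨hadj x e.1 f.1, hadj x f.1 e.1⟩
  -- fourth conjunct
  have fourth : ∀ x : L, ∀ y : X,
      y ∈ (perpSet perp {z : X | z.1 ≤ x})ᶜ → x ⊓ (oc x ⊔ y.1) ≠ ⊥ := by
    intro x y hy
    rw [Set.mem_compl_iff, hps] at hy
    exact hne x y.1 hy
  -- second conjunct
  have second : ∀ A : Set X, Orthoclosed perp A ↔ ∃ x : L, A = {y : X | y.1 ≤ x} := by
    intro A
    constructor
    · intro hA
      refine ⟨sSup (Subtype.val '' A), ?_⟩
      have hpA : perpSet perp A = {z : X | z.1 ≤ oc (sSup (Subtype.val '' A))} := by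
        ext z
        constructor
        · intro hz
          show z.1 ≤ oc _
          rw [hsymm]
          apply sSup_le
          rintro b ⟨a, ha, rfl⟩
          rw [← hsymm]
          exact hz a ha
        · intro hz a ha
          refine le_trans hz (horder _ _ ?_)
          exact le_sSup ⟨a, ha, rfl⟩
      calc A = perpSet perp (perpSet perp A) := hA.symm
      _ = {y : X | y.1 ≤ sSup (Subtype.val '' A)} := by rw [hpA, hpsS, hinv]
    · rintro ⟨x, rfl⟩
      unfold Orthoclosed
      rw [hpsS, hpsS, hinv]
  -- first conjunct
  have first : IsSasakiSpace perp := by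
    intro A hA
    obtain ⟨x, rfl⟩ := (second A).mp hA
    classical
    refine ⟨fun y => if h : x ⊓ (oc x ⊔ y.1) = ⊥ then y else ⟨_, h⟩, third x _ ?_⟩
    intro y hy
    have := fourth x y hy
    simp [this]
  exact ⟨first, second, third, fourth⟩
end

section
/- Let (X,⊥) be an orthoset, A an orthoclosed subset, and D a maximal ⊥-set (set of mutually orthogonal elements) contained in A. If there exists a Sasaki map to D^⊥, then A = D^⊥⊥. -/
/-- if `D` is a maximal ⊥-set contained in an orthoclosed set `A`
and there is a Sasaki map to `D^⊥`, then `A = D^⊥⊥`. -/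
theorem eq_double_perp_of_maximal_perpSet {X : Type*} (perp : X → X → Prop)
    (hsymm : ∀ x y, perp x y → perp y x) (hirrefl : ∀ x, ¬ perp x x)
    (A D : Set X) (hA : Orthoclosed perp A) (hDA : D ⊆ A)
    (hD : ∀ d ∈ D, ∀ e ∈ D, d ≠ e → perp d e)
    (hmax : ∀ x ∈ A, (∀ d ∈ D, perp x d) → x ∈ D)
    (hφ : ∃ φ : X → X, IsSasakiMap perp (perpSet perp D) φ) :
    A = perpSet perp (perpSet perp D) := by
  obtain ⟨φ, hmap, hfix, hadj⟩ := hφ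
  apply Set.Subset.antisymm
  · -- A ⊆ D^⊥⊥
    intro x hx
    by_contra hxB
    -- x ∈ ∁((D^⊥)^⊥)
    have hxC : x ∈ (perpSet perp (perpSet perp D))ᶜ := hxB
    have hφx : φ x ∈ perpSet perp D := hmap x hxC
    -- show φ x ∈ A = A^⊥⊥
    have hφxA : φ x ∈ A := by
      rw [← hA]
      intro z hz
      have hzD : z ∈ perpSet perp D := fun d hd => hz d (hDA hd)
      have hzC : z ∈ (perpSet perp (perpSet perp D))ᶜ := by
        intro hzB
        have : z ∈ A := by rw [← hA]; exact fun w hw => hzB w (fun d hd => hw d (hDA hd))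
        exact hirrefl z (hz z this)
      have h1 : perp (φ x) z ↔ perp x (φ z) := hadj x hxC z hzC
      rw [hfix z hzD] at h1
      exact h1.mpr (hsymm _ _ (hz x hx))
    have : φ x ∈ D := hmax _ hφxA (fun d hd => hφx d hd)
    exact hirrefl (φ x) (hφx _ this)
  · -- D^⊥⊥ ⊆ A
    intro x hx
    rw [← hA]
    intro z hz
    exact hx z (fun d hd => hz d (hDA hd))
end

section
/- An orthoset (X,⊥) is a Sasaki space if and only if for every ⊥-set D ⊆ X there is a Sasaki map to D^⊥. -/
section Aux

variable {X : Type*} {perp : X → X → Prop}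

lemma perpSet_subset_triple (hsymm : ∀ x y, perp x y → perp y x) (A : Set X) :
    A ⊆ perpSet perp (perpSet perp A) := by
  intro a ha y hy
  exact hsymm _ _ (hy a ha)

lemma perpSet_anti {A B : Set X} (h : A ⊆ B) : perpSet perp B ⊆ perpSet perp A :=
  fun x hx a ha => hx a (h ha)

lemma perpSet_triple (hsymm : ∀ x y, perp x y → perp y x) (A : Set X) :
    perpSet perp (perpSet perp (perpSet perp A)) = perpSet perp A := by
  apply le_antisymm
  · exact perpSet_anti (perpSet_subset_triple hsymm A)
  · exact perpSet_subset_triple hsymm (perpSet perp A)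

end Aux

/-- an orthoset is a Sasaki space iff every ⊥-set `D` admits a
Sasaki map to `D^⊥`. -/
theorem sasakiSpace_iff_perpSets {X : Type*} (perp : X → X → Prop)
    (hsymm : ∀ x y, perp x y → perp y x) (hirrefl : ∀ x, ¬ perp x x) :
    IsSasakiSpace perp ↔
      ∀ D : Set X, (∀ d ∈ D, ∀ e ∈ D, d ≠ e → perp d e) →
        ∃ φ : X → X, IsSasakiMap perp (perpSet perp D) φ := by
  constructor
  · intro h D _
    exact h (perpSet perp D) (perpSet_triple hsymm D)
  · intro h A hA
    set B : Set X := perpSet perp A with hB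
    -- pick a maximal ⊥-set E ⊆ B
    have hZ : ∃ m, Maximal (· ∈ {S : Set X | S ⊆ B ∧ ∀ d ∈ S, ∀ e ∈ S, d ≠ e → perp d e}) m := by
      apply zorn_subset
      intro c hc hchain
      refine ⟨⋃₀ c, ⟨?_, ?_⟩, fun s hs => Set.subset_sUnion_of_mem hs⟩
      · intro x hx
        obtain ⟨s, hs, hxs⟩ := hx
        exact (hc hs).1 hxs
      · rintro d ⟨s, hs, hds⟩ e ⟨t, ht, het⟩ hne
        rcases hchain.total hs ht with hst | hts
        · exact (hc ht).2 d (hst hds) e het hne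
        · exact (hc hs).2 d hds e (hts het) hne
    obtain ⟨E, ⟨hEB, hEperp⟩, hEmax⟩ := hZ
    obtain ⟨φ, hφA, hφfix, hφad⟩ := h E hEperp
    -- key claim: perpSet (perpSet E) = B
    have hsub : perpSet perp (perpSet perp E) ⊆ B := by
      have : A ⊆ perpSet perp E := by
        intro a ha e he
        exact hsymm _ _ (hEB he a ha)
      calc perpSet perp (perpSet perp E) ⊆ perpSet perp A := perpSet_anti this
        _ = B := rfl
    have hsup : B ⊆ perpSet perp (perpSet perp E) := by
      intro y hy
      by_contra hyn
      -- y is in the domain of φ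
      have hyd : y ∈ (perpSet perp (perpSet perp E))ᶜ := hyn
      have hφy : φ y ∈ perpSet perp E := hφA y hyd
      -- φ y ∈ B
      have hφyB : φ y ∈ B := by
        intro a ha
        have haE : a ∈ perpSet perp E := fun e he => hsymm _ _ (hEB he a ha)
        have had : a ∈ (perpSet perp (perpSet perp E))ᶜ := by
          intro hadd
          exact hirrefl a (hadd a haE)
        have := (hφad y hyd a had).mpr
        rw [hφfix a haE] at this
        exact this (hy a ha)
      -- φ y ∉ E
      have hφyE : φ y ∉ E := fun hmem => hirrefl (φ y) (hφy (φ y) hmem)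
      -- contradiction with maximality of E
      have hE' : insert (φ y) E ∈ {S : Set X | S ⊆ B ∧ ∀ d ∈ S, ∀ e ∈ S, d ≠ e → perp d e} := by
        constructor
        · intro x hx
          rcases hx with rfl | hx
          · exact hφyB
          · exact hEB hx
        · rintro d (rfl | hd) e (rfl | he) hne
          · exact absurd rfl hne
          · exact hφy e he
          · exact hsymm _ _ (hφy d hd)
          · exact hEperp d hd e he hne
      have := hEmax hE' (Set.subset_insert _ _)
      exact hφyE (this (Set.mem_insert _ _))
    have hBE : perpSet perp (perpSet perp E) = B := le_antisymm hsub hsup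
    have hEA : perpSet perp E = A := by
      have := congrArg (perpSet perp) hBE
      rw [perpSet_triple hsymm E] at this
      rw [this, hB, hA]
    rw [← hEA]
    exact h E hEperp
end

section
/- An orthomodular lattice L has the covering property if and only if every Sasaki projection π_x maps basic elements (atoms or 0) to basic elements. -/
section Aux
variable {L : Type*} [Lattice L] [BoundedOrder L] {oc : L → L}

lemma om_demorgan_sup (h : IsOrthomodular oc) (u v : L) :
    oc (u ⊔ v) = oc u ⊓ oc v := by
  obtain ⟨hanti, hinv, hcompl, hom⟩ := h
  apply le_antisymm
  · exact le_inf (hanti _ _ le_sup_left) (hanti _ _ le_sup_right)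
  · have h1 : u ≤ oc (oc u ⊓ oc v) := by
      have := hanti _ _ (inf_le_left : oc u ⊓ oc v ≤ oc u)
      rwa [hinv] at this
    have h2 : v ≤ oc (oc u ⊓ oc v) := by
      have := hanti _ _ (inf_le_right : oc u ⊓ oc v ≤ oc v)
      rwa [hinv] at this
    have := hanti _ _ (sup_le h1 h2)
    rwa [hinv] at this

lemma om_demorgan_inf (h : IsOrthomodular oc) (u v : L) :
    oc (u ⊓ v) = oc u ⊔ oc v := by
  have := om_demorgan_sup h (oc u) (oc v)
  rw [h.2.1, h.2.1] at this
  rw [← this, h.2.1]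

/-- Dual orthomodular law: if `v ≤ u` then `v = u ⊓ (v ⊔ oc u)`. -/
lemma om_dual (h : IsOrthomodular oc) {u v : L} (hvu : v ≤ u) :
    v = u ⊓ (v ⊔ oc u) := by
  obtain ⟨hanti, hinv, hcompl, hom⟩ := h
  have h2 : oc v = oc u ⊔ (oc v ⊓ u) := by
    have := hom _ _ (hanti _ _ hvu)
    rwa [hinv] at this
  have h3 : v = oc (oc u ⊔ (oc v ⊓ u)) := by rw [← h2, hinv]
  rw [om_demorgan_sup ⟨hanti, hinv, hcompl, hom⟩,
    om_demorgan_inf ⟨hanti, hinv, hcompl, hom⟩, hinv, hinv] at h3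
  exact h3

/-- Sasaki projection fixes elements below `x`. -/
lemma sasaki_fix (h : IsOrthomodular oc) {x b : L} (hb : b ≤ x) :
    x ⊓ (oc x ⊔ b) = b := by
  have := om_dual h hb
  rw [sup_comm] at this
  exact this.symm

end Aux

/-- an orthomodular lattice has the covering property iff every
Sasaki projection maps basic elements (atoms or `⊥`) to basic elements. -/
theorem covering_iff_sasakiProj_basic {L : Type*} [Lattice L] [BoundedOrder L]
    (oc : L → L) (h : IsOrthomodular oc) :
    (∀ (x a : L), IsAtom a → a ⊓ x = ⊥ → x ⋖ (x ⊔ a)) ↔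
    (∀ (x a : L), (a = ⊥ ∨ IsAtom a) →
      (sasakiProj oc x a = ⊥ ∨ IsAtom (sasakiProj oc x a))) := by
  obtain ⟨hanti, hinv, hcompl, hom⟩ := h
  have h' : IsOrthomodular oc := ⟨hanti, hinv, hcompl, hom⟩
  constructor
  · intro hcov x a ha
    rcases ha with rfl | ha
    · left
      simp [sasakiProj, hcompl x]
    · by_cases hax : a ≤ oc x
      · left
        have he : oc x ⊔ a = oc x := sup_eq_left.mpr hax
        simp [sasakiProj, he, hcompl x]
      · right
        set p := sasakiProj oc x a with hp
        have hdisj : a ⊓ oc x = ⊥ := by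
          rcases (ha.le_iff.mp (inf_le_left : a ⊓ oc x ≤ a)) with hh | hh
          · exact hh
          · exact absurd (hh ▸ inf_le_right) hax
        have hcover : oc x ⋖ (oc x ⊔ a) := hcov (oc x) a ha hdisj
        have hkey : oc x ⊔ a = oc x ⊔ p := by
          have := hom (oc x) (oc x ⊔ a) le_sup_left
          rwa [hinv, show (oc x ⊔ a) ⊓ x = p by rw [hp, sasakiProj, inf_comm]] at this
        have hpx : p ≤ x := inf_le_left
        have hpa : p ≤ oc x ⊔ a := inf_le_right
        have hpne : p ≠ ⊥ := by
          intro hbot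
          rw [hbot, sup_bot_eq] at hkey
          exact hax (le_sup_right.trans hkey.le)
        refine ⟨hpne, fun b hb => ?_⟩
        by_contra hbne
        have hbx : b ≤ x := hb.le.trans hpx
        have hbnle : ¬ b ≤ oc x := fun hle =>
          hbne (le_bot_iff.mp ((le_inf hbx hle).trans (hcompl x).le))
        have h1 : oc x < oc x ⊔ b :=
          lt_of_le_of_ne le_sup_left (fun heq => hbnle (heq ▸ le_sup_right))
        have hle : oc x ⊔ b ≤ oc x ⊔ a := sup_le le_sup_left (hb.le.trans hpa)
        have heq : oc x ⊔ b = oc x ⊔ a := by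
          by_contra hne
          exact hcover.2 h1 (lt_of_le_of_ne hle hne)
        have : b = p := by
          have := sasaki_fix h' hbx
          rw [heq] at this
          rw [← this, hp, sasakiProj]
        exact hb.ne this
  · intro hsas x a ha hdisj
    have hnax : ¬ a ≤ x := fun hle =>
      ha.1 (le_bot_iff.mp (hdisj ▸ le_inf le_rfl hle))
    have hlt : x < x ⊔ a :=
      lt_of_le_of_ne le_sup_left (fun heq => hnax (heq ▸ le_sup_right))
    set p := sasakiProj oc (oc x) a with hp
    have hpeq : p = oc x ⊓ (x ⊔ a) := by rw [hp, sasakiProj, hinv]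
    have hxa : x ⊔ a = x ⊔ p := by
      have := hom x (x ⊔ a) le_sup_left
      rwa [show (x ⊔ a) ⊓ oc x = p by rw [hpeq, inf_comm]] at this
    have hpatom : IsAtom p := by
      rcases hsas (oc x) a (Or.inr ha) with hbot | hatom
      · rw [← hp] at hbot
        rw [hbot, sup_bot_eq] at hxa
        exact absurd hxa hlt.ne'
      · rwa [← hp] at hatom
    refine ⟨hlt, fun c hc1 hc2 => ?_⟩
    have hq : c ⊓ oc x ≤ p :=
      (inf_le_inf_right _ hc2.le).trans_eq (by rw [hpeq, inf_comm])
    rcases hpatom.le_iff.mp hq with hq0 | hqp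
    · have := hom x c hc1.le
      rw [hq0, sup_bot_eq] at this
      exact hc1.ne this.symm
    · have := hom x c hc1.le
      rw [hqp, ← hxa] at this
      exact hc2.ne this
end

section
/- Let (X,⊥) be a Sasaki space, A an orthoclosed subset, and e ∉ A. Then A ∨ {e}^⊥⊥ = A ∨ {φ_{A^⊥}(e)}^⊥⊥ in C(X,⊥), where φ_{A^⊥} is a Sasaki map to A^⊥. -/
/-- in a Sasaki space, for orthoclosed `A` and `e ∉ A`,
`A ∨ {e} = A ∨ {φ_{A^⊥}(e)}` where `φ_{A^⊥}` is a Sasaki map to `A^⊥`. -/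
theorem join_with_atom_eq_join_with_sasaki_image {X : Type*} (perp : X → X → Prop)
    (hsymm : ∀ x y, perp x y → perp y x) (hirrefl : ∀ x, ¬ perp x x)
    (hSasaki : IsSasakiSpace perp)
    (A : Set X) (hA : Orthoclosed perp A) (e : X) (he : e ∉ A)
    (φ : X → X) (hφ : IsSasakiMap perp (perpSet perp A) φ) :
    perpSet perp (perpSet perp (A ∪ {e})) =
      perpSet perp (perpSet perp (A ∪ {φ e})) := by
  obtain ⟨h1, h2, h3⟩ := hφ
  -- domain of φ is ∁ A since perpSet (perpSet A) = A
  have hdom : (perpSet perp (perpSet perp A))ᶜ = Aᶜ := by rw [hA]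
  have heDom : e ∈ (perpSet perp (perpSet perp A))ᶜ := by rw [hdom]; exact he
  have key : perpSet perp (A ∪ {e}) = perpSet perp (A ∪ {φ e}) := by
    ext x
    constructor
    · intro hx a ha
      rcases ha with ha | ha
      · exact hx a (Or.inl ha)
      · rcases ha
        -- need perp x (φ e)
        have hxA : x ∈ perpSet perp A := fun b hb => hx b (Or.inl hb)
        have hxnA : x ∈ Aᶜ := by
          intro hxa
          exact hirrefl x (hxA x hxa)
        have hxDom : x ∈ (perpSet perp (perpSet perp A))ᶜ := by rw [hdom]; exact hxnA
        have hφx : φ x = x := h2 x hxA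
        have := (h3 e heDom x hxDom).mpr (by rw [hφx]; exact hsymm _ _ (hx e (Or.inr rfl)))
        exact hsymm _ _ this
    · intro hx a ha
      rcases ha with ha | ha
      · exact hx a (Or.inl ha)
      · rcases ha
        have hxA : x ∈ perpSet perp A := fun b hb => hx b (Or.inl hb)
        have hxnA : x ∈ Aᶜ := by
          intro hxa
          exact hirrefl x (hxA x hxa)
        have hxDom : x ∈ (perpSet perp (perpSet perp A))ᶜ := by rw [hdom]; exact hxnA
        have hφx : φ x = x := h2 x hxA
        have := (h3 e heDom x hxDom).mp (hsymm _ _ (hx (φ e) (Or.inr rfl)))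
        rw [hφx] at this
        exact hsymm _ _ this
  rw [key]
end

section
/- Let (X,⊥) be a Sasaki space, and for each orthoclosed A fix a Sasaki map φ_A and define φ̄_A on C(X,⊥) by φ̄_A(B) = {φ_A(e) : e ∈ B, e ∉ A^⊥}^⊥⊥. Then for all orthoclosed B, C: φ̄_A(B) ⊥ C if and only if B ⊥ φ̄_A(C); consequently φ̄_A preserves arbitrary joins in C(X,⊥). -/
/-- The extension `φ̄_A` of a Sasaki map to the lattice of orthoclosed sets:
`φ̄_A(B) = {φ_A(e) : e ∈ B, e ∉ A^⊥}^⊥⊥`. -/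
def sasakiBar {X : Type*} (perp : X → X → Prop) (A : Set X) (φ : X → X)
    (B : Set X) : Set X :=
  perpSet perp (perpSet perp (φ '' (B \ perpSet perp A)))

/-- in a Sasaki space, with a fixed choice `Φ A` of Sasaki map to
each orthoclosed `A`, the extension `φ̄_A` is self-adjoint w.r.t. orthogonality
and consequently preserves arbitrary joins in `C(X,⊥)`. -/
theorem sasakiBar_selfAdjoint_and_joinPreserving {X : Type*}
    (perp : X → X → Prop)
    (hsymm : ∀ x y, perp x y → perp y x) (hirrefl : ∀ x, ¬ perp x x)
    (hSasaki : IsSasakiSpace perp)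
    (Φ : Set X → (X → X))
    (hΦ : ∀ A : Set X, Orthoclosed perp A → IsSasakiMap perp A (Φ A))
    (A : Set X) (hA : Orthoclosed perp A) :
    (∀ B C : Set X, Orthoclosed perp B → Orthoclosed perp C →
      ((∀ b ∈ sasakiBar perp A (Φ A) B, ∀ c ∈ C, perp b c) ↔
       (∀ b ∈ B, ∀ c ∈ sasakiBar perp A (Φ A) C, perp b c))) ∧
    (∀ (I : Type) (B : I → Set X), (∀ i, Orthoclosed perp (B i)) →
      sasakiBar perp A (Φ A) (perpSet perp (perpSet perp (⋃ i, B i))) =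
        perpSet perp (perpSet perp (⋃ i, sasakiBar perp A (Φ A) (B i)))) := by
  obtain ⟨h1, h2, h3⟩ := hΦ A hA
  set φ := Φ A with hφ
  have subset_cl : ∀ S : Set X, S ⊆ perpSet perp (perpSet perp S) := by
    intro S b hb y hy; exact hsymm _ _ (hy b hb)
  have clL : ∀ S T : Set X,
      (∀ b ∈ perpSet perp (perpSet perp S), ∀ c ∈ T, perp b c) ↔
      (∀ b ∈ S, ∀ c ∈ T, perp b c) := by
    intro S T
    constructor
    · intro h b hb c hc; exact h b (subset_cl S hb) c hc
    · intro h b hb c hc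
      exact hb c (fun a ha => hsymm _ _ (h a ha c hc))
  have swap : ∀ S T : Set X,
      (∀ b ∈ S, ∀ c ∈ T, perp b c) ↔ (∀ b ∈ T, ∀ c ∈ S, perp b c) := by
    intro S T
    constructor <;> (intro h b hb c hc; exact hsymm _ _ (h c hc b hb))
  have clR : ∀ S T : Set X,
      (∀ b ∈ S, ∀ c ∈ perpSet perp (perpSet perp T), perp b c) ↔
      (∀ b ∈ S, ∀ c ∈ T, perp b c) := by
    intro S T
    rw [swap, clL, swap]
  have core : ∀ S T : Set X,
      (∀ b ∈ φ '' (S \ perpSet perp A), ∀ c ∈ T, perp b c) ↔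
      (∀ b ∈ S, ∀ c ∈ φ '' (T \ perpSet perp A), perp b c) := by
    intro S T
    constructor
    · rintro h b hb c ⟨f, ⟨hfT, hfA⟩, rfl⟩
      by_cases hbA : b ∈ perpSet perp A
      · exact hbA _ (h1 f hfA)
      · exact (h3 b hbA f hfA).mp (h (φ b) ⟨b, ⟨hb, hbA⟩, rfl⟩ f hfT)
    · rintro h b ⟨e, ⟨heS, heA⟩, rfl⟩ c hc
      by_cases hcA : c ∈ perpSet perp A
      · exact hsymm _ _ (hcA _ (h1 e heA))
      · exact (h3 e heA c hcA).mpr (h e heS (φ c) ⟨c, ⟨hc, hcA⟩, rfl⟩)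
  constructor
  · intro B C _ _
    show (∀ b ∈ perpSet perp (perpSet perp (φ '' (B \ perpSet perp A))), ∀ c ∈ C, perp b c) ↔
      (∀ b ∈ B, ∀ c ∈ perpSet perp (perpSet perp (φ '' (C \ perpSet perp A))), perp b c)
    rw [clL, core, clR]
  · intro I B hB
    unfold sasakiBar
    suffices h : perpSet perp (φ '' (perpSet perp (perpSet perp (⋃ i, B i)) \ perpSet perp A)) =
        perpSet perp (⋃ i, perpSet perp (perpSet perp (φ '' (B i \ perpSet perp A)))) by
      rw [h]
    ext x
    have key : ∀ U : Set X,
        (x ∈ perpSet perp U) ↔ (∀ b ∈ U, ∀ c ∈ ({x} : Set X), perp b c) := by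
      intro U
      constructor
      · intro h b hb c hc
        rw [Set.mem_singleton_iff] at hc; subst hc
        exact hsymm _ _ (h b hb)
      · intro h a ha; exact hsymm _ _ (h a ha x rfl)
    rw [key, key, core, clL]
    have union_iff : ∀ (V : I → Set X) (T : Set X),
        (∀ b ∈ ⋃ i, V i, ∀ c ∈ T, perp b c) ↔ (∀ i, ∀ b ∈ V i, ∀ c ∈ T, perp b c) := by
      intro V T
      constructor
      · intro h i b hb c hc; exact h b (Set.mem_iUnion.mpr ⟨i, hb⟩) c hc
      · intro h b hb c hc
        obtain ⟨i, hi⟩ := Set.mem_iUnion.mp hb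
        exact h i b hi c hc
    rw [union_iff, union_iff]
    apply forall_congr'
    intro i
    show (∀ b ∈ B i, ∀ c ∈ φ '' (({x} : Set X) \ perpSet perp A), perp b c) ↔
      (∀ b ∈ perpSet perp (perpSet perp (φ '' (B i \ perpSet perp A))), ∀ c ∈ ({x} : Set X), perp b c)
    rw [clL, core]
end
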